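/- Let (P_n)_{n≥1} be a family of probability distributions, with P_n a distribution on RB(n) for each n, such that each P_n is exchangeable and the family is sampling consistent. Then for every real number λ > e·√2 there exists a natural number m such that for all n ≥ m, for T₁, T₂ independent random trees each distributed according to P_n, E[MAST(T₁,T₂)] ≤ λ·√n. -/

import Mathlib

/-- Rooted binary leaf-labeled trees with labels of type `α`. -/
inductive RTree (α : Type) : Type where
  | leaf : α → RTree α
  | node : RTree α → RTree α → RTree α
  deriving DecidableEq

namespace RTree

variable {α β : Type}

/-- The multiset of leaf labels of a tree. -/
def leafM : RTree α → Multiset α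
  | leaf a => {a}
  | node l r => leafM l + leafM r

/-- `T` is a rooted binary leaf-labeled tree on label set `Fin n`:
every label of `Fin n` occurs exactly once among the leaves. -/
def IsRB {n : ℕ} (T : RTree (Fin n)) : Prop :=
  leafM T = (Finset.univ : Finset (Fin n)).val

/-- Relabel the leaves of a tree along a function. -/
def relabel (f : α → β) : RTree α → RTree β
  | leaf a => leaf (f a)
  | node l r => node (relabel f l) (relabel f r)

/-- Restriction of a tree to the set `A` of labels (`none` means the empty tree). -/
def restrict [DecidableEq α] (A : Finset α) : RTree α → Option (RTree α)
  | leaf a => if a ∈ A then some (leaf a) else none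
  | node l r =>
    match restrict A l, restrict A r with
    | some l', some r' => some (node l' r')
    | some l', none => some l'
    | none, some r' => some r'
    | none, none => none

/-- The size of a maximum agreement subtree of `T₁` and `T₂`: the largest cardinality
of a set `A` of labels with `T₁|_A = T₂|_A` (the empty set always agrees). -/
def mast {n : ℕ} (T₁ T₂ : RTree (Fin n)) : ℕ :=
  ((Finset.univ : Finset (Fin n)).powerset.filter
    (fun A => restrict A T₁ = restrict A T₂)).sup Finset.card

end RTree

namespace RTree

variable {γ : Type}

theorem leafM_relabel (f : α → β) : ∀ T : RTree α, leafM (relabel f T) = (leafM T).map f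
  | leaf a => by simp [leafM, relabel]
  | node l r => by simp [leafM, relabel, leafM_relabel f l, leafM_relabel f r]

theorem leafM_card_pos : ∀ T : RTree α, 0 < Multiset.card (leafM T)
  | leaf a => by simp [leafM]
  | node l r => by
      simp only [leafM, Multiset.card_add]
      exact Nat.lt_of_lt_of_le (leafM_card_pos l) (Nat.le_add_right _ _)

theorem leafM_ne_zero (T : RTree α) : leafM T ≠ 0 := by
  intro h
  have := leafM_card_pos T
  rw [h] at this
  simp at this
theorem relabel_comp (f : β → γ) (g : α → β) :
    ∀ T : RTree α, relabel f (relabel g T) = relabel (f ∘ g) T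
  | leaf a => rfl
  | node l r => by simp [relabel, relabel_comp f g l, relabel_comp f g r]

theorem relabel_id : ∀ T : RTree α, relabel id T = T
  | leaf a => rfl
  | node l r => by simp [relabel, relabel_id l, relabel_id r]

theorem relabel_congr {f g : α → β} :
    ∀ T : RTree α, (∀ a ∈ leafM T, f a = g a) → relabel f T = relabel g T
  | leaf a, h => by simp [relabel, h a (by simp [leafM])]
  | node l r, h => by
      simp only [relabel, node.injEq]
      exact ⟨relabel_congr l fun a ha => h a (by simp [leafM, ha]),
        relabel_congr r fun a ha => h a (by simp [leafM, ha])⟩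

theorem relabel_injective {f : α → β} (hf : Function.Injective f) :
    Function.Injective (relabel f) := by
  intro T₁ T₂ h
  induction T₁ generalizing T₂ with
  | leaf a => cases T₂ with
    | leaf b => simp only [relabel, leaf.injEq] at h ⊢; exact hf h
    | node l r => simp [relabel] at h
  | node l r ihl ihr => cases T₂ with
    | leaf b => simp [relabel] at h
    | node l' r' =>
        simp only [relabel, node.injEq] at h
        exact by rw [ihl h.1, ihr h.2]

theorem eq_of_relabel_eq {f g : α → β} :
    ∀ T : RTree α, relabel f T = relabel g T → ∀ a ∈ leafM T, f a = g a
  | leaf b, h => by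
      simp only [relabel, leaf.injEq] at h
      intro a ha; simp [leafM] at ha; subst ha; exact h
  | node l r, h => by
      simp only [relabel, node.injEq] at h
      intro a ha
      simp only [leafM, Multiset.mem_add] at ha
      rcases ha with ha | ha
      · exact eq_of_relabel_eq l h.1 a ha
      · exact eq_of_relabel_eq r h.2 a ha

theorem restrict_restrict [DecidableEq α] {A B : Finset α} (h : B ⊆ A) :
    ∀ T : RTree α, (restrict A T).bind (restrict B) = restrict B T
  | leaf a => by
      by_cases ha : a ∈ A
      · simp [restrict, ha]
      · have hb : a ∉ B := fun hb => ha (h hb)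
        simp [restrict, ha, hb]
  | node l r => by
      have hl := restrict_restrict h l
      have hr := restrict_restrict h r
      simp only [restrict]
      rcases hA : restrict A l with _ | l' <;> rcases hA' : restrict A r with _ | r' <;>
        rw [hA] at hl <;> rw [hA'] at hr <;>
        simp only [Option.bind_none, Option.bind_some] at hl hr ⊢
      · rw [← hl, ← hr]
      · rw [← hl, ← hr]
        rcases restrict B r' with _ | y <;> rfl
      · rw [← hl, ← hr]
        rcases restrict B l' with _ | x <;> rfl
      · rw [← hl, ← hr]
        simp only [restrict]

theorem agree_mono [DecidableEq α] {A B : Finset α} (h : B ⊆ A) {T₁ T₂ : RTree α}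
    (hag : restrict A T₁ = restrict A T₂) : restrict B T₁ = restrict B T₂ := by
  rw [← restrict_restrict h T₁, ← restrict_restrict h T₂, hag]

theorem restrict_elim [DecidableEq α] (A : Finset α) :
    ∀ T : RTree α, ((restrict A T).elim 0 leafM) = (leafM T).filter (· ∈ A)
  | leaf a => by
      by_cases ha : a ∈ A <;> simp [restrict, leafM, ha, Multiset.filter_singleton]
  | node l r => by
      have hl := restrict_elim A l
      have hr := restrict_elim A r
      simp only [restrict, leafM, Multiset.filter_add]
      rcases hA : restrict A l with _ | l' <;> rcases hA' : restrict A r with _ | r' <;>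
        rw [hA] at hl <;> rw [hA'] at hr <;>
        simp only [Option.elim] at hl hr <;> rw [← hl, ← hr] <;> simp [leafM]

theorem restrict_eq_some [DecidableEq α] {A : Finset α} {T : RTree α}
    (h : (leafM T).filter (· ∈ A) ≠ 0) :
    ∃ T', restrict A T = some T' ∧ leafM T' = (leafM T).filter (· ∈ A) := by
  have := restrict_elim A T
  rcases hA : restrict A T with _ | T'
  · rw [hA] at this; simp only [Option.elim] at this; exact absurd this.symm h
  · rw [hA] at this; exact ⟨T', rfl, this⟩

theorem restrict_relabel {β : Type} [DecidableEq α] [DecidableEq β] {f : α → β}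
    (hf : Function.Injective f) (A : Finset α) :
    ∀ T : RTree α, restrict (A.image f) (relabel f T) = (restrict A T).map (relabel f)
  | leaf a => by
      by_cases ha : a ∈ A
      · simp [restrict, relabel, ha, Finset.mem_image_of_mem f ha]
      · have : f a ∉ A.image f := fun hmem => by
          obtain ⟨x, hx, hfx⟩ := Finset.mem_image.mp hmem
          exact ha (hf hfx ▸ hx)
        simp [restrict, relabel, ha, this]
  | node l r => by
      have hl := restrict_relabel hf A l
      have hr := restrict_relabel hf A r
      simp only [restrict, relabel]
      rcases hA : restrict A l with _ | l' <;> rcases hA' : restrict A r with _ | r' <;>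
        rw [hA] at hl <;> rw [hA'] at hr <;>
        simp only [Option.map_none, Option.map_some] at hl hr <;> rw [hl, hr] <;>
        simp [relabel]

theorem mast_le_card {n : ℕ} (T₁ T₂ : RTree (Fin n)) : mast T₁ T₂ ≤ n := by
  apply Finset.sup_le
  intro A hA
  simpa using Finset.card_le_card (Finset.mem_powerset.mp (Finset.mem_filter.mp hA).1)

theorem exists_agree_of_lt_mast {n k : ℕ} {T₁ T₂ : RTree (Fin n)} (h : k < mast T₁ T₂) :
    ∃ A : Finset (Fin n), A.card = k + 1 ∧ restrict A T₁ = restrict A T₂ := by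
  rw [mast, Finset.lt_sup_iff] at h
  obtain ⟨A, hA, hcard⟩ := h
  rw [Finset.mem_filter] at hA
  obtain ⟨B, hBA, hBcard⟩ := Finset.exists_subset_card_eq hcard
  exact ⟨B, hBcard, agree_mono hBA hA.2⟩

theorem isRB_relabel_perm {n : ℕ} (σ : Equiv.Perm (Fin n)) {T : RTree (Fin n)}
    (h : IsRB T) : IsRB (relabel (⇑σ) T) := by
  unfold IsRB at *
  rw [leafM_relabel, h]
  have : (Finset.univ : Finset (Fin n)).val.map ⇑σ
      = ((Finset.univ : Finset (Fin n)).map σ.toEmbedding).val := rfl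
  rw [this, Finset.map_univ_equiv]

end RTree

/-- The marginal distribution on trees with `s` leaves induced by a distribution `p` on
trees with `n` leaves (supported on the finite set `RBn`):
`pₛ(t) = ∑_{T ∈ RBn, T|_{{0,…,s−1}} = ι(t)} p(T)`, where `ι` identifies trees on `Fin s`
with trees on the label subset `{0,…,s−1}` of `Fin n`. -/
noncomputable def marginal {n : ℕ} (RBn : Finset (RTree (Fin n))) (p : RTree (Fin n) → ℝ)
    (s : ℕ) (h : s ≤ n) (t : RTree (Fin s)) : ℝ :=
  ∑ T ∈ RBn.filter (fun T =>
      RTree.restrict ((Finset.univ : Finset (Fin s)).image (Fin.castLE h)) T =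
        some (RTree.relabel (Fin.castLE h) t)), p T

theorem perm_image_exists {n : ℕ} (A B : Finset (Fin n)) (h : A.card = B.card) :
    ∃ σ : Equiv.Perm (Fin n), A.image ⇑σ = B := by
  classical
  have hc : Fintype.card ↥A = Fintype.card ↥B := by
    rw [Fintype.card_coe, Fintype.card_coe, h]
  have hc' : Fintype.card {x : Fin n // ¬ x ∈ A} = Fintype.card {x : Fin n // ¬ x ∈ B} := by
    rw [Fintype.card_subtype_compl, Fintype.card_subtype_compl]
    rw [Fintype.card_coe, Fintype.card_coe, h]
  let e₁ : {x : Fin n // x ∈ A} ≃ {x : Fin n // x ∈ B} := Fintype.equivOfCardEq hc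
  let e₂ : {x : Fin n // ¬ x ∈ A} ≃ {x : Fin n // ¬ x ∈ B} := Fintype.equivOfCardEq hc'
  let σ : Equiv.Perm (Fin n) :=
    ((Equiv.sumCompl (· ∈ A)).symm.trans (Equiv.sumCongr e₁ e₂)).trans
      (Equiv.sumCompl (· ∈ B))
  refine ⟨σ, ?_⟩
  have hsub : A.image ⇑σ ⊆ B := by
    intro b hb
    obtain ⟨a, ha, rfl⟩ := Finset.mem_image.mp hb
    have : σ a = ((e₁ ⟨a, ha⟩ : ↥B) : Fin n) := by
      simp only [σ, Equiv.trans_apply, Equiv.sumCompl_symm_apply_of_pos ha,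
        Equiv.sumCongr_apply, Sum.map_inl, Equiv.sumCompl_apply_inl]
    rw [this]
    exact (e₁ ⟨a, ha⟩).2
  apply Finset.eq_of_subset_of_card_le hsub
  rw [Finset.card_image_of_injective _ σ.injective, h]

section Transport

variable {n : ℕ} (RBn : Finset (RTree (Fin n))) (p : RTree (Fin n) → ℝ)

theorem map_relabel_RB (hRBn : ∀ T, T ∈ RBn ↔ RTree.IsRB T) (σ : Equiv.Perm (Fin n)) :
    RBn.map ⟨RTree.relabel ⇑σ, RTree.relabel_injective σ.injective⟩ = RBn := by
  apply Finset.eq_of_subset_of_card_le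
  · intro T hT
    obtain ⟨T', hT', rfl⟩ := Finset.mem_map.mp hT
    exact (hRBn _).mpr (RTree.isRB_relabel_perm σ ((hRBn _).mp hT'))
  · rw [Finset.card_map]

theorem sum_relabel (hRBn : ∀ T, T ∈ RBn ↔ RTree.IsRB T) (σ : Equiv.Perm (Fin n)) (g : RTree (Fin n) → ℝ) :
    ∑ T ∈ RBn, g (RTree.relabel ⇑σ T) = ∑ T ∈ RBn, g T := by
  conv_rhs => rw [← map_relabel_RB RBn hRBn σ]
  rw [Finset.sum_map]
  rfl

theorem sum2_relabel (hRBn : ∀ T, T ∈ RBn ↔ RTree.IsRB T) (σ : Equiv.Perm (Fin n))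
    (g : RTree (Fin n) → RTree (Fin n) → ℝ) :
    ∑ T₁ ∈ RBn, ∑ T₂ ∈ RBn, g (RTree.relabel ⇑σ T₁) (RTree.relabel ⇑σ T₂)
      = ∑ T₁ ∈ RBn, ∑ T₂ ∈ RBn, g T₁ T₂ :=
  calc ∑ T₁ ∈ RBn, ∑ T₂ ∈ RBn, g (RTree.relabel ⇑σ T₁) (RTree.relabel ⇑σ T₂)
      = ∑ T₁ ∈ RBn, ∑ T₂ ∈ RBn, g (RTree.relabel ⇑σ T₁) T₂ :=
        Finset.sum_congr rfl (fun T₁ _ => sum_relabel RBn hRBn σ _)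
    _ = ∑ T₁ ∈ RBn, ∑ T₂ ∈ RBn, g T₁ T₂ :=
        sum_relabel RBn hRBn σ (fun T => ∑ T₂ ∈ RBn, g T T₂)

/-- Transport the agreement pair-sum from any `A` to any same-size `B`. -/
theorem agree_pair_sum_eq (hRBn : ∀ T, T ∈ RBn ↔ RTree.IsRB T)
    (hinv : ∀ (σ : Equiv.Perm (Fin n)) (T : RTree (Fin n)), RTree.IsRB T →
      p (RTree.relabel ⇑σ T) = p T)
    (A B : Finset (Fin n)) (hAB : A.card = B.card) :
    ∑ T₁ ∈ RBn, ∑ T₂ ∈ RBn,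
        (if RTree.restrict B T₁ = RTree.restrict B T₂ then p T₁ * p T₂ else 0)
      = ∑ T₁ ∈ RBn, ∑ T₂ ∈ RBn,
        (if RTree.restrict A T₁ = RTree.restrict A T₂ then p T₁ * p T₂ else 0) := by
  classical
  obtain ⟨σ, hσ⟩ := perm_image_exists A B hAB
  calc ∑ T₁ ∈ RBn, ∑ T₂ ∈ RBn,
        (if RTree.restrict B T₁ = RTree.restrict B T₂ then p T₁ * p T₂ else 0)
      = ∑ T₁ ∈ RBn, ∑ T₂ ∈ RBn,
        (if RTree.restrict B (RTree.relabel ⇑σ T₁) = RTree.restrict B (RTree.relabel ⇑σ T₂)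
          then p (RTree.relabel ⇑σ T₁) * p (RTree.relabel ⇑σ T₂) else 0) :=
        (sum2_relabel RBn hRBn σ (fun T₁ T₂ =>
          if RTree.restrict B T₁ = RTree.restrict B T₂ then p T₁ * p T₂ else 0)).symm
    _ = ∑ T₁ ∈ RBn, ∑ T₂ ∈ RBn,
        (if RTree.restrict A T₁ = RTree.restrict A T₂ then p T₁ * p T₂ else 0) := by
        apply Finset.sum_congr rfl
        intro T₁ hT₁
        apply Finset.sum_congr rfl
        intro T₂ hT₂
        have h₁ : RTree.restrict B (RTree.relabel ⇑σ T₁)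
            = (RTree.restrict A T₁).map (RTree.relabel ⇑σ) := by
          rw [← hσ]; exact RTree.restrict_relabel σ.injective A T₁
        have h₂ : RTree.restrict B (RTree.relabel ⇑σ T₂)
            = (RTree.restrict A T₂).map (RTree.relabel ⇑σ) := by
          rw [← hσ]; exact RTree.restrict_relabel σ.injective A T₂
        have hcond : (RTree.restrict B (RTree.relabel ⇑σ T₁)
            = RTree.restrict B (RTree.relabel ⇑σ T₂))
            ↔ (RTree.restrict A T₁ = RTree.restrict A T₂) := by
          rw [h₁, h₂]
          exact ⟨fun h => Option.map_injective (RTree.relabel_injective σ.injective) h,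
            fun h => by rw [h]⟩
        rw [hinv σ T₁ ((hRBn _).mp hT₁), hinv σ T₂ ((hRBn _).mp hT₂)]
        by_cases hc : RTree.restrict A T₁ = RTree.restrict A T₂
        · rw [if_pos hc, if_pos (hcond.mpr hc)]
        · rw [if_neg hc, if_neg (fun hx => hc (hcond.mp hx))]

end Transport


noncomputable def projTree {n s : ℕ} (hs : 1 ≤ s) (hsn : s ≤ n) (T : RTree (Fin n)) :
    RTree (Fin s) :=
  match RTree.restrict ((Finset.univ : Finset (Fin s)).image (Fin.castLE hsn)) T with
  | some T' => RTree.relabel (fun x : Fin n => if h : (x : ℕ) < s then (⟨x, h⟩ : Fin s) else ⟨0, hs⟩) T'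
  | none => RTree.leaf ⟨0, hs⟩

theorem castLE_inj {n s : ℕ} (hsn : s ≤ n) : Function.Injective (Fin.castLE hsn) :=
  (Fin.strictMono_castLE hsn).injective

theorem A0_val {n s : ℕ} (hsn : s ≤ n) :
    ((Finset.univ : Finset (Fin s)).image (Fin.castLE hsn)).val
      = (Finset.univ : Finset (Fin s)).val.map (Fin.castLE hsn) := by
  rw [Finset.image_val,
    Multiset.dedup_eq_self.mpr (Multiset.Nodup.map (castLE_inj hsn) (Finset.univ.nodup))]

theorem A0_card {n s : ℕ} (hsn : s ≤ n) :
    ((Finset.univ : Finset (Fin s)).image (Fin.castLE hsn)).card = s := by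
  rw [Finset.card_image_of_injective _ (castLE_inj hsn), Finset.card_univ, Fintype.card_fin]

theorem projTree_spec {n s : ℕ} (hs : 1 ≤ s) (hsn : s ≤ n) {T : RTree (Fin n)}
    (hT : RTree.IsRB T) :
    RTree.restrict ((Finset.univ : Finset (Fin s)).image (Fin.castLE hsn)) T
      = some (RTree.relabel (Fin.castLE hsn) (projTree hs hsn T))
    ∧ RTree.IsRB (projTree hs hsn T) := by
  classical
  set A₀ := (Finset.univ : Finset (Fin s)).image (Fin.castLE hsn) with hA₀
  have hfilter : (RTree.leafM T).filter (· ∈ A₀) = A₀.val := by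
    rw [hT, ← Finset.filter_val, Finset.filter_univ_mem]
  have hne : (RTree.leafM T).filter (· ∈ A₀) ≠ 0 := by
    rw [hfilter]
    intro h0
    have hcard : A₀.card = 0 := by rw [Finset.card_def, h0]; rfl
    rw [A0_card hsn] at hcard
    omega
  obtain ⟨T', hT', hleafT'⟩ := RTree.restrict_eq_some hne
  rw [hfilter] at hleafT'
  set g : Fin n → Fin s := fun x => if h : (x : ℕ) < s then ⟨x, h⟩ else ⟨0, hs⟩ with hg
  have hproj : projTree hs hsn T = RTree.relabel g T' := by
    unfold projTree
    rw [← hA₀, hT']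
  have hgc : ∀ b : Fin s, g (Fin.castLE hsn b) = b := by
    intro b
    have hb : ((Fin.castLE hsn b : Fin n) : ℕ) < s := b.2
    simp only [hg]
    rw [dif_pos hb]
    exact Fin.ext rfl
  have hback : ∀ a ∈ RTree.leafM T', Fin.castLE hsn (g a) = a := by
    intro a ha
    rw [hleafT', A0_val hsn] at ha
    obtain ⟨b, _, rfl⟩ := Multiset.mem_map.mp ha
    rw [hgc b]
  have hcollapse : RTree.relabel (Fin.castLE hsn) (projTree hs hsn T) = T' := by
    rw [hproj, RTree.relabel_comp]
    have h1 : RTree.relabel (Fin.castLE hsn ∘ g) T' = RTree.relabel id T' :=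
      RTree.relabel_congr T' (fun a ha => hback a ha)
    rw [h1, RTree.relabel_id]
  constructor
  · rw [hT', hcollapse]
  · unfold RTree.IsRB
    rw [hproj, RTree.leafM_relabel, hleafT', A0_val hsn, Multiset.map_map]
    have : g ∘ Fin.castLE hsn = id := funext hgc
    rw [this, Multiset.map_id]

theorem agree_sum_sq {n s : ℕ} (hs : 1 ≤ s) (hsn : s ≤ n)
    (RBn : Finset (RTree (Fin n))) (hRBn : ∀ T, T ∈ RBn ↔ RTree.IsRB T)
    (RBs : Finset (RTree (Fin s))) (hRBs : ∀ t, t ∈ RBs ↔ RTree.IsRB t)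
    (p : RTree (Fin n) → ℝ) :
    ∑ T₁ ∈ RBn, ∑ T₂ ∈ RBn,
        (if RTree.restrict ((Finset.univ : Finset (Fin s)).image (Fin.castLE hsn)) T₁
            = RTree.restrict ((Finset.univ : Finset (Fin s)).image (Fin.castLE hsn)) T₂
          then p T₁ * p T₂ else 0)
      = ∑ t ∈ RBs, (marginal RBn p s hsn t) ^ 2 := by
  classical
  set A₀ := (Finset.univ : Finset (Fin s)).image (Fin.castLE hsn) with hA₀
  set F := projTree hs hsn with hF
  have hspec : ∀ T ∈ RBn, RTree.restrict A₀ T = some (RTree.relabel (Fin.castLE hsn) (F T)) :=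
    fun T hT => (projTree_spec hs hsn ((hRBn T).mp hT)).1
  have hFRB : ∀ T ∈ RBn, F T ∈ RBs :=
    fun T hT => (hRBs _).mpr (projTree_spec hs hsn ((hRBn T).mp hT)).2
  have hcond : ∀ T₁ ∈ RBn, ∀ T₂ ∈ RBn,
      (RTree.restrict A₀ T₁ = RTree.restrict A₀ T₂ ↔ F T₁ = F T₂) := by
    intro T₁ h₁ T₂ h₂
    rw [hspec T₁ h₁, hspec T₂ h₂]
    constructor
    · intro h
      exact RTree.relabel_injective (castLE_inj hsn) (Option.some_injective _ h)
    · intro h; rw [h]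
  set q : RTree (Fin s) → ℝ := fun t => ∑ T ∈ RBn.filter (fun T => F T = t), p T with hq
  have hmarg : ∀ t ∈ RBs, marginal RBn p s hsn t = q t := by
    intro t ht
    unfold marginal
    rw [hq]
    congr 1
    apply Finset.filter_congr
    intro T hT
    rw [← hA₀, hspec T hT]
    constructor
    · intro h
      exact RTree.relabel_injective (castLE_inj hsn) (Option.some_injective _ h)
    · intro h; rw [h]
  calc ∑ T₁ ∈ RBn, ∑ T₂ ∈ RBn,
        (if RTree.restrict A₀ T₁ = RTree.restrict A₀ T₂ then p T₁ * p T₂ else 0)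
      = ∑ T₁ ∈ RBn, p T₁ * q (F T₁) := by
        apply Finset.sum_congr rfl
        intro T₁ h₁
        rw [hq, Finset.mul_sum, Finset.sum_filter]
        apply Finset.sum_congr rfl
        intro T₂ h₂
        by_cases hc : RTree.restrict A₀ T₁ = RTree.restrict A₀ T₂
        · rw [if_pos hc, if_pos ((hcond T₁ h₁ T₂ h₂).mp hc).symm]
        · rw [if_neg hc, if_neg (fun hx => hc ((hcond T₁ h₁ T₂ h₂).mpr hx.symm))]
    _ = ∑ t ∈ RBs, ∑ T₁ ∈ RBn.filter (fun T => F T = t), p T₁ * q (F T₁) :=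
        (Finset.sum_fiberwise_of_maps_to hFRB _).symm
    _ = ∑ t ∈ RBs, (q t) ^ 2 := by
        apply Finset.sum_congr rfl
        intro t ht
        have : ∀ T₁ ∈ RBn.filter (fun T => F T = t), p T₁ * q (F T₁) = p T₁ * q t := by
          intro T₁ h₁
          rw [(Finset.mem_filter.mp h₁).2]
        rw [Finset.sum_congr rfl this, ← Finset.sum_mul]
        have hqt : (∑ i ∈ Finset.filter (fun T => F T = t) RBn, p i) = q t := rfl
        rw [hqt, sq]
    _ = ∑ t ∈ RBs, (marginal RBn p s hsn t) ^ 2 := by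
        apply Finset.sum_congr rfl
        intro t ht
        rw [hmarg t ht]

theorem prob_le_inv_factorial {s : ℕ} (RBs : Finset (RTree (Fin s)))
    (hRBs : ∀ t, t ∈ RBs ↔ RTree.IsRB t) (p : RTree (Fin s) → ℝ)
    (hp0 : ∀ t, 0 ≤ p t) (hp1 : ∑ t ∈ RBs, p t = 1)
    (hx : ∀ (σ : Equiv.Perm (Fin s)) (t : RTree (Fin s)), RTree.IsRB t →
      p (RTree.relabel ⇑σ t) = p t)
    {t : RTree (Fin s)} (ht : t ∈ RBs) :
    (s.factorial : ℝ) * p t ≤ 1 := by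
  classical
  have htRB := (hRBs t).mp ht
  have hinj : Function.Injective (fun σ : Equiv.Perm (Fin s) => RTree.relabel ⇑σ t) := by
    intro σ τ h
    apply Equiv.ext
    intro a
    refine RTree.eq_of_relabel_eq t h a ?_
    rw [htRB]
    exact Finset.mem_val.mpr (Finset.mem_univ a)
  set O := Finset.univ.image (fun σ : Equiv.Perm (Fin s) => RTree.relabel ⇑σ t) with hO
  have hOsub : O ⊆ RBs := by
    intro u hu
    obtain ⟨σ, _, rfl⟩ := Finset.mem_image.mp hu
    exact (hRBs _).mpr (RTree.isRB_relabel_perm σ htRB)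
  have hsum : ∑ u ∈ O, p u = (s.factorial : ℝ) * p t := by
    rw [hO, Finset.sum_image (fun σ _ τ _ h => hinj h)]
    rw [Finset.sum_congr rfl (fun σ _ => hx σ t htRB), Finset.sum_const, Finset.card_univ,
      Fintype.card_perm, Fintype.card_fin, nsmul_eq_mul]
  calc (s.factorial : ℝ) * p t = ∑ u ∈ O, p u := hsum.symm
    _ ≤ ∑ u ∈ RBs, p u := Finset.sum_le_sum_of_subset_of_nonneg hOsub (fun u _ _ => hp0 u)
    _ = 1 := hp1


theorem pow_self_le_exp_factorial : ∀ j : ℕ, (j : ℝ) ^ j ≤ Real.exp 1 ^ j * (j.factorial : ℝ) := by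
  intro j
  induction j with
  | zero => simp
  | succ j ih =>
    have he1 : (1:ℝ) ≤ Real.exp 1 := Real.one_le_exp (by norm_num)
    have hepos : (0:ℝ) < Real.exp 1 := Real.exp_pos 1
    rcases Nat.eq_zero_or_pos j with rfl | hj
    · simpa using he1
    · have hjR : (0:ℝ) < j := by exact_mod_cast hj
      have hquot : (1 + 1/(j:ℝ)) ^ j ≤ Real.exp 1 := by
        have h1 : (1 + 1/(j:ℝ)) ≤ Real.exp (1/(j:ℝ)) := by
          have := Real.add_one_le_exp (1/(j:ℝ)); linarith
        have h2 : (1 + 1/(j:ℝ)) ^ j ≤ Real.exp (1/(j:ℝ)) ^ j :=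
          pow_le_pow_left₀ (by positivity) h1 j
        rwa [← Real.exp_nat_mul, mul_one_div, div_self (ne_of_gt hjR)]
          at h2
      have hstep : ((j:ℝ)+1) ^ j ≤ Real.exp 1 * (j:ℝ)^j := by
        have hsplit : ((j:ℝ)+1) = (j:ℝ) * (1 + 1/(j:ℝ)) := by field_simp
        rw [hsplit, mul_pow]
        calc (j:ℝ)^j * (1 + 1/(j:ℝ))^j ≤ (j:ℝ)^j * Real.exp 1 :=
              mul_le_mul_of_nonneg_left hquot (by positivity)
          _ = Real.exp 1 * (j:ℝ)^j := mul_comm _ _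
      have hgoal : ((j:ℝ)+1) ^ (j+1) ≤ Real.exp 1 ^ (j+1) * (((j:ℝ)+1) * (j.factorial : ℝ)) := by
        calc ((j:ℝ)+1) ^ (j+1) = ((j:ℝ)+1) * ((j:ℝ)+1)^j := by rw [pow_succ]; ring
          _ ≤ ((j:ℝ)+1) * (Real.exp 1 * (j:ℝ)^j) :=
              mul_le_mul_of_nonneg_left hstep (by positivity)
          _ ≤ ((j:ℝ)+1) * (Real.exp 1 * (Real.exp 1 ^ j * (j.factorial : ℝ))) := by
              apply mul_le_mul_of_nonneg_left _ (by positivity)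
              exact mul_le_mul_of_nonneg_left ih (le_of_lt hepos)
          _ = Real.exp 1 ^ (j+1) * (((j:ℝ)+1) * (j.factorial : ℝ)) := by ring
      have hc1 : ((j+1 : ℕ) : ℝ) = (j:ℝ) + 1 := by push_cast; ring
      have hc2 : (((j+1).factorial : ℕ) : ℝ) = ((j:ℝ)+1) * (j.factorial : ℝ) := by
        rw [Nat.factorial_succ]; push_cast; ring
      rw [hc1, hc2]
      exact hgoal

theorem sq_le_two_pow {s : ℕ} (h : 4 ≤ s) : s^2 ≤ 2^s := by
  induction s, h using Nat.le_induction with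
  | base => norm_num
  | succ s hs ih =>
    have h1 : 2*s+1 ≤ s^2 := by nlinarith
    have h2 : 2*s+1 ≤ 2^s := le_trans h1 ih
    calc (s+1)^2 = s^2 + (2*s+1) := by ring
      _ ≤ 2^s + 2^s := Nat.add_le_add ih h2
      _ = 2^(s+1) := by ring

theorem tail_le {n s : ℕ} (hs4 : 4 ≤ s)
    (hsq : 2 * Real.exp 1 ^ 2 * (n:ℝ) ≤ (s:ℝ)^2) :
    (n : ℝ) * (n.choose s : ℝ) ≤ (s.factorial : ℝ) := by
  have hfac_pos : (0:ℝ) < (s.factorial : ℝ) := by exact_mod_cast s.factorial_pos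
  have hn0 : (0:ℝ) ≤ (n:ℝ) := Nat.cast_nonneg n
  have he : (1:ℝ) ≤ Real.exp 1 := Real.one_le_exp (by norm_num)
  have he2 : (1:ℝ) ≤ Real.exp 1 ^ 2 := by nlinarith
  have hn2e : (n:ℝ) ≤ 2 * Real.exp 1 ^ 2 * (n:ℝ) := by nlinarith
  have hn_le_s2 : (n:ℝ) ≤ (s:ℝ)^2 := le_trans hn2e hsq
  have hs2_le : ((s:ℝ))^2 ≤ (2:ℝ)^s := by
    have h := sq_le_two_pow hs4
    have := (Nat.cast_le (α := ℝ)).mpr h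
    push_cast at this
    exact this
  have hdesc : (n.choose s : ℝ) * (s.factorial : ℝ) ≤ (n:ℝ)^s := by
    have h2 : s.factorial * n.choose s = n.descFactorial s :=
      (Nat.descFactorial_eq_factorial_mul_choose n s).symm
    have h3 : s.factorial * n.choose s ≤ n ^ s := h2 ▸ Nat.descFactorial_le_pow n s
    have h4 := (Nat.cast_le (α := ℝ)).mpr h3
    push_cast at h4
    linarith
  have hkey : ((2:ℝ) * n)^s ≤ (s.factorial:ℝ)^2 := by
    have hA : ((2:ℝ) * n * Real.exp 1 ^ 2)^s ≤ (((s:ℝ))^2)^s := by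
      apply pow_le_pow_left₀ (by positivity)
      nlinarith
    have hB : (((s:ℝ))^2)^s = ((s:ℝ)^s)^2 := by
      rw [← pow_mul, ← pow_mul, Nat.mul_comm]
    have hC : ((s:ℝ)^s)^2 ≤ (Real.exp 1 ^ s * (s.factorial:ℝ))^2 :=
      pow_le_pow_left₀ (by positivity) (pow_self_le_exp_factorial s) 2
    have hE : (Real.exp 1 ^ s * (s.factorial:ℝ))^2 = (s.factorial:ℝ)^2 * (Real.exp 1^2)^s := by
      rw [mul_pow, ← pow_mul, ← pow_mul]; ring
    have hD : ((2:ℝ)*n)^s * (Real.exp 1 ^ 2)^s ≤ (s.factorial:ℝ)^2 * (Real.exp 1^2)^s := by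
      calc ((2:ℝ)*n)^s * (Real.exp 1^2)^s = ((2:ℝ)*n*Real.exp 1^2)^s := (mul_pow _ _ s).symm
        _ ≤ (((s:ℝ))^2)^s := hA
        _ = ((s:ℝ)^s)^2 := hB
        _ ≤ (Real.exp 1 ^ s * (s.factorial:ℝ))^2 := hC
        _ = (s.factorial:ℝ)^2 * (Real.exp 1^2)^s := hE
    exact le_of_mul_le_mul_right hD (by positivity)
  have hpow : (n:ℝ)^(s+1) ≤ ((2:ℝ)*n)^s := by
    rw [mul_pow, pow_succ]
    calc (n:ℝ)^s * n ≤ (n:ℝ)^s * (2:ℝ)^s :=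
        mul_le_mul_of_nonneg_left (le_trans hn_le_s2 hs2_le) (by positivity)
      _ = (2:ℝ)^s * (n:ℝ)^s := mul_comm _ _
  have hfinal : (n:ℝ) * (n.choose s : ℝ) * (s.factorial:ℝ)
      ≤ (s.factorial:ℝ) * (s.factorial:ℝ) := by
    calc (n:ℝ) * (n.choose s : ℝ) * (s.factorial:ℝ)
        = (n:ℝ) * ((n.choose s : ℝ) * (s.factorial:ℝ)) := by ring
      _ ≤ (n:ℝ) * (n:ℝ)^s := mul_le_mul_of_nonneg_left hdesc hn0
      _ = (n:ℝ)^(s+1) := by rw [pow_succ]; ring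
      _ ≤ ((2:ℝ)*n)^s := hpow
      _ ≤ (s.factorial:ℝ)^2 := hkey
      _ = (s.factorial:ℝ) * (s.factorial:ℝ) := sq (s.factorial:ℝ)
  exact le_of_mul_le_mul_right hfinal hfac_pos

set_option maxHeartbeats 1000000 in
/-- If `(Pₙ)` is a family of exchangeable probability distributions (`Pₙ` on `RB(n)`) that is
sampling consistent, then for every `λ > e·√2` there is an `m` such that for all `n ≥ m`,
the expected size of the maximum agreement subtree of two independent `Pₙ`-random trees is
at most `λ·√n`. -/
theorem expected_mast_sampling_consistent_upper_bound
    (P : ∀ n : ℕ, RTree (Fin n) → ℝ)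
    (RB : ∀ n : ℕ, Finset (RTree (Fin n)))
    (hRB : ∀ (n : ℕ) (T : RTree (Fin n)), T ∈ RB n ↔ RTree.IsRB T)
    (hP0 : ∀ (n : ℕ) (T : RTree (Fin n)), 0 ≤ P n T)
    (hP1 : ∀ n : ℕ, 1 ≤ n → ∑ T ∈ RB n, P n T = 1)
    (hexch : ∀ (n : ℕ) (σ : Equiv.Perm (Fin n)) (T : RTree (Fin n)), RTree.IsRB T →
      P n (RTree.relabel (⇑σ) T) = P n T)
    (hsc : ∀ (s n : ℕ) (hs : 1 ≤ s) (hsn : s < n), ∀ t ∈ RB s,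
      P s t = marginal (RB n) (P n) s hsn.le t) :
    ∀ lam : ℝ, Real.exp 1 * Real.sqrt 2 < lam →
      ∃ m : ℕ, ∀ n : ℕ, m ≤ n →
        ∑ T₁ ∈ RB n, ∑ T₂ ∈ RB n, P n T₁ * P n T₂ * (RTree.mast T₁ T₂ : ℝ)
          ≤ lam * Real.sqrt n := by
  intro lam hlam
  set c : ℝ := Real.exp 1 * Real.sqrt 2 with hc
  have he_lb : (2.7:ℝ) < Real.exp 1 := by
    have := Real.exp_one_gt_d9; linarith
  have he_ub : Real.exp 1 < 2.7182818286 := Real.exp_one_lt_d9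
  have hs2_lb : (1.4:ℝ) ≤ Real.sqrt 2 := by
    have h : (1.4:ℝ) = Real.sqrt (1.96) := by
      rw [show (1.96:ℝ) = 1.4^2 by norm_num, Real.sqrt_sq (by norm_num : (0:ℝ) ≤ 1.4)]
    rw [h]
    exact Real.sqrt_le_sqrt (by norm_num)
  have hs2_ub : Real.sqrt 2 < 1.42 := by
    rw [Real.sqrt_lt' (by norm_num : (0:ℝ) < 1.42)]
    norm_num
  have hc3 : (3:ℝ) ≤ c := by
    have h := mul_le_mul (le_of_lt he_lb) hs2_lb (by norm_num) (by linarith)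
    rw [hc]; linarith
  have hc4 : c ≤ 4 := by
    have h := mul_le_mul (le_of_lt he_ub) (le_of_lt hs2_ub) (Real.sqrt_nonneg 2)
      (by norm_num)
    rw [hc]; linarith
  have hd : 0 < lam - c := by linarith
  clear_value c
  refine ⟨max 25 (⌈(2/(lam - c))^2⌉₊ + 1), ?_⟩
  intro n hn
  have hn25 : 25 ≤ n := le_trans (le_max_left _ _) hn
  have hn1 : 1 ≤ n := by omega
  have hnR : (25:ℝ) ≤ (n:ℝ) := by exact_mod_cast hn25
  have hnR0 : (0:ℝ) ≤ (n:ℝ) := by linarith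
  have hsq5 : (5:ℝ) ≤ Real.sqrt n := by
    have h : (5:ℝ) = Real.sqrt 25 := by
      rw [show (25:ℝ) = 5^2 by norm_num, Real.sqrt_sq (by norm_num : (0:ℝ) ≤ 5)]
    rw [h]
    exact Real.sqrt_le_sqrt hnR
  have hsqpos : (0:ℝ) < Real.sqrt n := by linarith
  have hsqle : Real.sqrt n ≤ (n:ℝ)/5 := by
    have h1 : (25:ℝ) * n ≤ (n:ℝ) * n := mul_le_mul_of_nonneg_right hnR hnR0
    apply Real.sqrt_le_iff.mpr
    constructor
    · linarith
    · nlinarith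
  set k : ℕ := ⌈c * Real.sqrt n⌉₊ with hk
  have hck : c * Real.sqrt n ≤ (k:ℝ) := Nat.le_ceil _
  have hcsq0 : (0:ℝ) ≤ c * Real.sqrt n := mul_nonneg (by linarith) (le_of_lt hsqpos)
  have hk_ub : (k:ℝ) < c * Real.sqrt n + 1 := Nat.ceil_lt_add_one hcsq0
  clear_value k
  have hk15 : (15:ℝ) ≤ (k:ℝ) := by
    have h : (3:ℝ) * 5 ≤ c * Real.sqrt n := mul_le_mul hc3 hsq5 (by norm_num) (by linarith)
    linarith
  have hs4 : 4 ≤ k + 1 := by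
    have h4 : (4:ℝ) ≤ (k:ℝ) := by linarith
    have h4' : 4 ≤ k := by exact_mod_cast h4
    omega
  have hs1 : 1 ≤ k + 1 := by omega
  have hsn : k + 1 < n := by
    have h2 : c * Real.sqrt n ≤ 4 * ((n:ℝ)/5) :=
      mul_le_mul hc4 hsqle (le_of_lt hsqpos) (by norm_num)
    have h3 : ((k+1 : ℕ):ℝ) < (n:ℝ) := by push_cast; linarith
    exact_mod_cast h3
  set s : ℕ := k + 1 with hsdef
  have hsq2 : 2 * Real.exp 1 ^ 2 * (n:ℝ) ≤ (s:ℝ)^2 := by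
    have h1 : c * Real.sqrt n ≤ (s:ℝ) := by
      rw [hsdef]; push_cast; linarith
    have h2 : (c * Real.sqrt n)^2 = 2 * Real.exp 1^2 * (n:ℝ) := by
      rw [hc, mul_pow, mul_pow, Real.sq_sqrt (by norm_num : (0:ℝ) ≤ 2), Real.sq_sqrt hnR0]
      ring
    have h3 := pow_le_pow_left₀ hcsq0 h1 2
    rw [h2] at h3
    exact h3
  clear_value s
  have hPP1 : ∑ T₁ ∈ RB n, ∑ T₂ ∈ RB n, P n T₁ * P n T₂ = 1 := by
    have h : ∀ T₁ ∈ RB n, ∑ T₂ ∈ RB n, P n T₁ * P n T₂ = P n T₁ := by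
      intro T₁ _
      rw [← Finset.mul_sum, hP1 n hn1, mul_one]
    rw [Finset.sum_congr rfl h, hP1 n hn1]
  set A₀ : Finset (Fin n) := (Finset.univ : Finset (Fin s)).image (Fin.castLE hsn.le)
    with hA0
  have hA0card : A₀.card = s := A0_card hsn.le
  have hfac_pos : (0:ℝ) < (s.factorial : ℝ) := by exact_mod_cast s.factorial_pos
  have hSA0 : ∑ T₁ ∈ RB n, ∑ T₂ ∈ RB n,
      (if RTree.restrict A₀ T₁ = RTree.restrict A₀ T₂ then P n T₁ * P n T₂ else 0)
      ≤ 1 / (s.factorial : ℝ) := by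
    rw [hA0, agree_sum_sq hs1 hsn.le (RB n) (hRB n) (RB s) (hRB s) (P n)]
    have hmg : ∀ t ∈ RB s, marginal (RB n) (P n) s hsn.le t = P s t :=
      fun t ht => (hsc s n hs1 hsn t ht).symm
    rw [Finset.sum_congr rfl (fun t ht => by rw [hmg t ht])]
    have hb : ∀ t ∈ RB s, (P s t)^2 ≤ (1/(s.factorial:ℝ)) * P s t := by
      intro t ht
      have h1 : (s.factorial : ℝ) * P s t ≤ 1 :=
        prob_le_inv_factorial (RB s) (hRB s) (P s) (hP0 s) (hP1 s hs1) (hexch s) ht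
      have h2 : P s t ≤ 1/(s.factorial:ℝ) := by
        rw [le_div_iff₀ hfac_pos]; linarith
      have h0 : 0 ≤ P s t := hP0 s t
      nlinarith
    calc ∑ t ∈ RB s, (P s t)^2 ≤ ∑ t ∈ RB s, (1/(s.factorial:ℝ)) * P s t :=
        Finset.sum_le_sum hb
      _ = (1/(s.factorial:ℝ)) * ∑ t ∈ RB s, P s t := by rw [Finset.mul_sum]
      _ = 1/(s.factorial:ℝ) := by rw [hP1 s hs1, mul_one]
  have hind : ∀ T₁ ∈ RB n, ∀ T₂ ∈ RB n,
      (if k < RTree.mast T₁ T₂ then P n T₁ * P n T₂ else 0)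
      ≤ ∑ A ∈ Finset.powersetCard s (Finset.univ : Finset (Fin n)),
          (if RTree.restrict A T₁ = RTree.restrict A T₂ then P n T₁ * P n T₂ else 0) := by
    intro T₁ hT₁ T₂ hT₂
    have hnn : ∀ A ∈ Finset.powersetCard s (Finset.univ : Finset (Fin n)),
        0 ≤ (if RTree.restrict A T₁ = RTree.restrict A T₂ then P n T₁ * P n T₂ else 0) := by
      intro A _
      by_cases h : RTree.restrict A T₁ = RTree.restrict A T₂
      · rw [if_pos h]; exact mul_nonneg (hP0 n T₁) (hP0 n T₂)
      · rw [if_neg h]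
    by_cases hcs : k < RTree.mast T₁ T₂
    · rw [if_pos hcs]
      obtain ⟨A, hAcard, hAagree⟩ := RTree.exists_agree_of_lt_mast hcs
      rw [← hsdef] at hAcard
      have hAmem : A ∈ Finset.powersetCard s (Finset.univ : Finset (Fin n)) :=
        Finset.mem_powersetCard_univ.mpr hAcard
      have h := Finset.single_le_sum hnn hAmem
      rw [if_pos hAagree] at h
      exact h
    · rw [if_neg hcs]
      exact Finset.sum_nonneg hnn
  have hW : ∑ T₁ ∈ RB n, ∑ T₂ ∈ RB n,
        (if k < RTree.mast T₁ T₂ then P n T₁ * P n T₂ else 0)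
      ≤ (n.choose s : ℝ) * (1/(s.factorial:ℝ)) := by
    calc ∑ T₁ ∈ RB n, ∑ T₂ ∈ RB n, (if k < RTree.mast T₁ T₂ then P n T₁ * P n T₂ else 0)
        ≤ ∑ T₁ ∈ RB n, ∑ T₂ ∈ RB n, ∑ A ∈ Finset.powersetCard s (Finset.univ : Finset (Fin n)),
            (if RTree.restrict A T₁ = RTree.restrict A T₂ then P n T₁ * P n T₂ else 0) :=
          Finset.sum_le_sum (fun T₁ h₁ => Finset.sum_le_sum (fun T₂ h₂ => hind T₁ h₁ T₂ h₂))
      _ = ∑ T₁ ∈ RB n, ∑ A ∈ Finset.powersetCard s (Finset.univ : Finset (Fin n)),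
            ∑ T₂ ∈ RB n,
            (if RTree.restrict A T₁ = RTree.restrict A T₂ then P n T₁ * P n T₂ else 0) :=
          Finset.sum_congr rfl (fun T₁ _ => Finset.sum_comm)
      _ = ∑ A ∈ Finset.powersetCard s (Finset.univ : Finset (Fin n)), ∑ T₁ ∈ RB n,
            ∑ T₂ ∈ RB n,
            (if RTree.restrict A T₁ = RTree.restrict A T₂ then P n T₁ * P n T₂ else 0) :=
          Finset.sum_comm
      _ ≤ ∑ A ∈ Finset.powersetCard s (Finset.univ : Finset (Fin n)), 1/(s.factorial:ℝ) := by
          apply Finset.sum_le_sum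
          intro A hA
          have hAcard : A.card = s := Finset.mem_powersetCard_univ.mp hA
          have htrans := agree_pair_sum_eq (RB n) (P n) (hRB n) (hexch n) A₀ A
            (by rw [hA0card, hAcard])
          rw [htrans]
          exact hSA0
      _ = (n.choose s : ℝ) * (1/(s.factorial:ℝ)) := by
          rw [Finset.sum_const, Finset.card_powersetCard, Finset.card_univ, Fintype.card_fin,
            nsmul_eq_mul]
  have hterm : ∀ T₁ T₂ : RTree (Fin n), P n T₁ * P n T₂ * (RTree.mast T₁ T₂:ℝ)
      ≤ P n T₁ * P n T₂ * (k:ℝ)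
        + (n:ℝ) * (if k < RTree.mast T₁ T₂ then P n T₁ * P n T₂ else 0) := by
    intro T₁ T₂
    have hpp := mul_nonneg (hP0 n T₁) (hP0 n T₂)
    by_cases hcs : k < RTree.mast T₁ T₂
    · rw [if_pos hcs]
      have h1 : (RTree.mast T₁ T₂ : ℝ) ≤ (n:ℝ) := by
        exact_mod_cast RTree.mast_le_card T₁ T₂
      have hk0 : (0:ℝ) ≤ (k:ℝ) := Nat.cast_nonneg k
      nlinarith
    · rw [if_neg hcs]
      have h1 : (RTree.mast T₁ T₂ : ℝ) ≤ (k:ℝ) := by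
        exact_mod_cast Nat.not_lt.mp hcs
      nlinarith
  have hE : ∑ T₁ ∈ RB n, ∑ T₂ ∈ RB n, P n T₁ * P n T₂ * (RTree.mast T₁ T₂ : ℝ)
      ≤ (k:ℝ) + (n:ℝ) * ((n.choose s:ℝ) * (1/(s.factorial:ℝ))) := by
    calc ∑ T₁ ∈ RB n, ∑ T₂ ∈ RB n, P n T₁ * P n T₂ * (RTree.mast T₁ T₂ : ℝ)
        ≤ ∑ T₁ ∈ RB n, ∑ T₂ ∈ RB n, (P n T₁ * P n T₂ * (k:ℝ)
            + (n:ℝ) * (if k < RTree.mast T₁ T₂ then P n T₁ * P n T₂ else 0)) :=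
          Finset.sum_le_sum (fun T₁ _ => Finset.sum_le_sum (fun T₂ _ => hterm T₁ T₂))
      _ = (∑ T₁ ∈ RB n, ∑ T₂ ∈ RB n, P n T₁ * P n T₂) * (k:ℝ)
          + (n:ℝ) * ∑ T₁ ∈ RB n, ∑ T₂ ∈ RB n,
            (if k < RTree.mast T₁ T₂ then P n T₁ * P n T₂ else 0) := by
          rw [Finset.sum_mul, Finset.mul_sum, ← Finset.sum_add_distrib]
          apply Finset.sum_congr rfl
          intro T₁ _
          rw [Finset.sum_mul, Finset.mul_sum, ← Finset.sum_add_distrib]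
      _ ≤ 1 * (k:ℝ) + (n:ℝ) * ((n.choose s:ℝ) * (1/(s.factorial:ℝ))) := by
          rw [hPP1]
          have h := mul_le_mul_of_nonneg_left hW hnR0
          linarith
      _ = (k:ℝ) + (n:ℝ) * ((n.choose s:ℝ) * (1/(s.factorial:ℝ))) := by ring
  have htail : (n:ℝ) * ((n.choose s:ℝ) * (1/(s.factorial:ℝ))) ≤ 1 := by
    have h := tail_le hs4 hsq2
    rw [← mul_assoc, mul_one_div, div_le_one hfac_pos]
    exact h
  have hfin1 : (2:ℝ) ≤ (lam - c) * Real.sqrt n := by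
    have hx : (2/(lam-c)) ≤ Real.sqrt n := by
      have h1 : (⌈(2/(lam - c))^2⌉₊ + 1 : ℕ) ≤ n := le_trans (le_max_right _ _) hn
      have h2 : ((2/(lam-c))^2 : ℝ) ≤ (⌈(2/(lam - c))^2⌉₊ : ℝ) := Nat.le_ceil _
      have h3 : ((⌈(2/(lam - c))^2⌉₊ : ℕ) : ℝ) ≤ (n:ℝ) := by
        exact_mod_cast le_trans (Nat.le_succ _) h1
      exact Real.le_sqrt_of_sq_le (by linarith)
    have h4 : (lam - c) * (2/(lam-c)) ≤ (lam - c) * Real.sqrt n :=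
      mul_le_mul_of_nonneg_left hx (le_of_lt hd)
    have h5 : (lam - c) * (2/(lam-c)) = 2 := by field_simp
    linarith
  calc ∑ T₁ ∈ RB n, ∑ T₂ ∈ RB n, P n T₁ * P n T₂ * (RTree.mast T₁ T₂ : ℝ)
      ≤ (k:ℝ) + (n:ℝ) * ((n.choose s:ℝ) * (1/(s.factorial:ℝ))) := hE
    _ ≤ (k:ℝ) + 1 := by linarith
    _ ≤ c * Real.sqrt n + 2 := by linarith
    _ ≤ lam * Real.sqrt n := by nlinarith
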